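/- Let p be a prime, F a field of characteristic p, V a finite group, U a subgroup of V, and K a normal subgroup of V contained in U. If F₀ is a finite-dimensional projective F[U/K]-module, then every indecomposable direct summand of the induced module Ind_U^V(Inf_{U/K}(F₀)) is isomorphic to the inflation of a projective F[V/K]-module; in particular, every such summand is a direct summand of a finite direct sum of copies of the permutation module F[V/K], hence exprojective. -/

import Mathlib

open CategoryTheory Limits

/-- `M` is (isomorphic to) a direct summand of `N`, i.e. a retract of `N`. -/
def IsDirectSummand {C : Type*} [Category C] (M N : C) : Prop :=
  ∃ (i : M ⟶ N) (r : N ⟶ M), i ≫ r = 𝟙 M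

instance {F : Type} [Field F] {G : Type} [Group G] : HasFiniteBiproducts (Rep.{0} F G) :=
  HasFiniteBiproducts.of_hasFiniteProducts

/-- A representation is indecomposable if it is nonzero and in any decomposition
as a direct sum of two representations, one factor is zero. -/
def RepIndecomposable {F : Type} [Field F] {G : Type} [Group G] (M : Rep.{0} F G) : Prop :=
  ¬ IsZero M ∧ ∀ X Y : Rep.{0} F G, Nonempty (M ≅ X ⊞ Y) → IsZero X ∨ IsZero Y

/-- A representation is exprojective if it is isomorphic to a direct summand of a
finite direct sum of permutation modules `F[G/K]` with each `K` normal in `G`. -/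
def Exprojective {F : Type} [Field F] {G : Type} [Group G] (M : Rep.{0} F G) : Prop :=
  ∃ (n : ℕ) (K : Fin n → Subgroup G), (∀ i, (K i).Normal) ∧
    IsDirectSummand M (⨁ fun i => Rep.ofMulAction F G (G ⧸ K i))

variable {F : Type} [Field F] {G : Type} [Group G]

/-- The relations defining `F[G] ⊗_{F[H]} E`: `(g h) ⊗ v = g ⊗ (h ⬝ v)`. -/
noncomputable def indRel (H : Subgroup G) (E : Rep.{0} F H) : Submodule F (G →₀ E) :=
  Submodule.span F {x : G →₀ E | ∃ (g : G) (h : H) (v : E),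
    x = Finsupp.single (g * (h : G)) v - Finsupp.single g (E.ρ h v)}

/-- Left translation by `g₀` on `F[G] ⊗_F E`. -/
noncomputable def indMap (H : Subgroup G) (E : Rep.{0} F H) (g₀ : G) :
    (G →₀ E) →ₗ[F] (G →₀ E) :=
  Finsupp.lmapDomain E F (fun g => g₀ * g)

lemma indRel_le (H : Subgroup G) (E : Rep.{0} F H) (g₀ : G) :
    indRel H E ≤ (indRel H E).comap (indMap H E g₀) := by
  rw [indRel, Submodule.span_le]
  rintro x ⟨g, h, v, rfl⟩
  simp only [SetLike.mem_coe, Submodule.mem_comap, map_sub, indMap, Finsupp.lmapDomain_apply,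
    Finsupp.mapDomain_single]
  exact Submodule.subset_span ⟨g₀ * g, h, v, by rw [mul_assoc]⟩

/-- The representation of `G` on `F[G] ⊗_{F[H]} E` by left translation. -/
noncomputable def indρ (H : Subgroup G) (E : Rep.{0} F H) :
    Representation F G ((G →₀ E) ⧸ indRel H E) where
  toFun g₀ := Submodule.mapQ _ _ (indMap H E g₀) (indRel_le H E g₀)
  map_one' := by
    apply Submodule.linearMap_qext
    ext g v
    simp [indMap, Submodule.mapQ_apply]
  map_mul' g₁ g₂ := by
    apply Submodule.linearMap_qext
    ext g v
    simp [indMap, Submodule.mapQ_apply, mul_assoc]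

/-- The induced module `Ind_H^G E = F[G] ⊗_{F[H]} E`. -/
noncomputable def ind (H : Subgroup G) (E : Rep.{0} F H) : Rep.{0} F G := Rep.of (indρ H E)

section IndLemmas

variable (H : Subgroup G) (E : Rep.{0} F H)

noncomputable def indMk : (G →₀ E) →ₗ[F] (ind H E) :=
  (indRel H E).mkQ

lemma ind_ρ_mk (g₀ : G) (x : G →₀ E) :
    (ind H E).ρ g₀ (indMk H E x) = indMk H E (Finsupp.mapDomain (g₀ * ·) x) := by
  show Submodule.mapQ _ _ (indMap H E g₀) (indRel_le H E g₀) (indMk H E x) = _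
  simp [ind, indρ, indMk, indMap, Submodule.mapQ_apply, Rep.of_ρ]
  rfl

lemma indMk_rel {g : G} {h : H} {v : E} :
    indMk H E (Finsupp.single (g * (h : G)) v) = indMk H E (Finsupp.single g (E.ρ h v)) := by
  rw [← sub_eq_zero, ← map_sub, indMk]
  exact (Submodule.Quotient.mk_eq_zero _).mpr (Submodule.subset_span ⟨g, h, v, rfl⟩)

lemma indMk_surjective : Function.Surjective (indMk H E) :=
  Submodule.mkQ_surjective _

end IndLemmas

section EpiLemmas

lemma Rep.hom_surjective_of_epi {X Y : Rep.{0} F G} (e : X ⟶ Y) [Epi e] :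
    Function.Surjective e.hom := by
  exact (Rep.epi_iff_surjective e).mp inferInstance

lemma Rep.epi_of_surjective {X Y : Rep.{0} F G} (e : X ⟶ Y)
    (h : Function.Surjective e.hom) : Epi e := by
  exact (Rep.epi_iff_surjective e).mpr h

end EpiLemmas

section IndAdjunction

variable (H : Subgroup G) (E : Rep.{0} F H)

/-- Restriction to the subgroup `H`. -/
noncomputable abbrev resH : Rep.{0} F G ⥤ Rep.{0} F H :=
  Rep.resFunctor H.subtype

lemma indUnit_comm (h : H) (v : E) :
    indMk H E (Finsupp.single 1 (E.ρ h v)) = (ind H E).ρ (h : G) (indMk H E (Finsupp.single 1 v)) := by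
  rw [ind_ρ_mk, Finsupp.mapDomain_single, mul_one, ← one_mul ((h : H) : G), indMk_rel]

/-- The unit `E ⟶ Res (Ind E)`, `v ↦ 1 ⊗ v`. -/
noncomputable def indUnit : E ⟶ (resH H).obj (ind H E) :=
  ConcreteCategory.ofHom (C := Rep.{0} F H)
    ⟨(indMk H E).comp (Finsupp.lsingle 1), fun h => by
      ext v
      exact indUnit_comm H E h v⟩

variable {H E} {X : Rep.{0} F G}

/-- Underlying linear map of `indDesc`. -/
noncomputable def indDescAux (φ : E ⟶ (resH H).obj X) : (G →₀ E) →ₗ[F] X.V :=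
  Finsupp.lsum F fun g => (X.ρ g).comp φ.hom.toLinearMap

lemma indDescAux_single (φ : E ⟶ (resH H).obj X) (g : G) (v : E) :
    indDescAux φ (Finsupp.single g v) = X.ρ g (φ.hom v) := by
  simp [indDescAux]

lemma res_hom_comm_apply (φ : E ⟶ (resH H).obj X) (h : H) (v : E) :
    φ.hom (E.ρ h v) = X.ρ ((h : H) : G) (φ.hom v) :=
  Rep.hom_comm_apply φ h v

lemma indRel_le_ker (φ : E ⟶ (resH H).obj X) :
    indRel H E ≤ LinearMap.ker (indDescAux φ) := by
  rw [indRel, Submodule.span_le]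
  rintro x ⟨g, h, v, rfl⟩
  simp only [SetLike.mem_coe, LinearMap.mem_ker, map_sub, indDescAux_single,
    res_hom_comm_apply, map_mul, Module.End.mul_apply, sub_self]
  rw [res_hom_comm_apply, sub_self]

lemma indDesc_comm (φ : E ⟶ (resH H).obj X) (g₀ : G) :
    ((indRel H E).liftQ (indDescAux φ) (indRel_le_ker φ)).comp
        (((ind H E).ρ g₀ : (ind H E).V →ₗ[F] (ind H E).V))
      = (X.ρ g₀).comp ((indRel H E).liftQ (indDescAux φ) (indRel_le_ker φ)) := by
  apply Submodule.linearMap_qext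
  ext g v
  show ((indRel H E).liftQ (indDescAux φ) (indRel_le_ker φ))
      ((ind H E).ρ g₀ (indMk H E (Finsupp.single g v)))
    = X.ρ g₀ (((indRel H E).liftQ (indDescAux φ) (indRel_le_ker φ)) (indMk H E (Finsupp.single g v)))
  rw [ind_ρ_mk, Finsupp.mapDomain_single]
  show indDescAux φ (Finsupp.single (g₀ * g) v) = X.ρ g₀ (indDescAux φ (Finsupp.single g v))
  simp [indDescAux_single, map_mul]

/-- The map `Ind E ⟶ X` induced by `φ : E ⟶ Res X`. -/
noncomputable def indDesc (φ : E ⟶ (resH H).obj X) : ind H E ⟶ X :=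
  ConcreteCategory.ofHom (C := Rep.{0} F G)
    ⟨(indRel H E).liftQ (indDescAux φ) (indRel_le_ker φ), fun g₀ => indDesc_comm φ g₀⟩

lemma indDesc_mk_single (φ : E ⟶ (resH H).obj X) (g : G) (v : E) :
    (indDesc φ).hom (indMk H E (Finsupp.single g v)) = X.ρ g (φ.hom v) := by
  show indDescAux φ (Finsupp.single g v) = _
  exact indDescAux_single φ g v

lemma ind_hom_ext {f f' : ind H E ⟶ X}
    (h : ∀ (g : G) (v : E), f.hom (indMk H E (Finsupp.single g v))
      = f'.hom (indMk H E (Finsupp.single g v))) : f = f' := by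
  apply Rep.hom_ext
  apply Representation.IntertwiningMap.ext
  apply Submodule.linearMap_qext
  ext g v
  exact h g v

lemma ind_projective (hE : Projective E) : Projective (ind H E) := by
  constructor
  intro Y Z f e he
  have hsurj : Function.Surjective e.hom := Rep.hom_surjective_of_epi e
  have hre : Epi ((resH H).map e) := Rep.epi_of_surjective _ hsurj
  obtain ⟨φ, hφ⟩ := hE.factors (indUnit H E ≫ (resH H).map f) ((resH H).map e)
  refine ⟨indDesc φ, ?_⟩
  apply ind_hom_ext
  intro g v
  show e.hom ((indDesc φ).hom (indMk H E (Finsupp.single g v))) = _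
  rw [indDesc_mk_single]
  have h1 : e.hom (Y.ρ g (φ.hom v)) = Z.ρ g (e.hom (φ.hom v)) := Rep.hom_comm_apply e g _
  have h2 : e.hom (φ.hom v) = f.hom (indMk H E (Finsupp.single 1 v)) := by
    have := congrArg (fun ψ => ψ.hom v) hφ
    simpa [indUnit] using this
  have h3 : f.hom ((ind H E).ρ g (indMk H E (Finsupp.single 1 v)))
      = Z.ρ g (f.hom (indMk H E (Finsupp.single 1 v))) := Rep.hom_comm_apply f g _
  rw [h1, h2, ← h3, ind_ρ_mk, Finsupp.mapDomain_single, mul_one]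

end IndAdjunction
section Inflation

variable (K : Subgroup G) [K.Normal]

/-- Inflation functor along `G → G ⧸ K`. -/
noncomputable abbrev infl : Rep.{0} F (G ⧸ K) ⥤ Rep.{0} F G :=
  Rep.resFunctor (QuotientGroup.mk' K)

variable {K}

/-- Descend a representation with trivial `K`-action to `G ⧸ K`. -/
noncomputable def descend (M : Rep.{0} F G) (hM : ∀ k : G, k ∈ K → M.ρ k = 1) :
    Rep.{0} F (G ⧸ K) :=
  Rep.of (X := M.V) ((Units.coeHom (Module.End F M.V)).comp
    (QuotientGroup.lift K M.ρ.asGroupHom (by intro k hk; exact MonoidHom.mem_ker.mpr (Units.ext (by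
      rw [Units.val_one, ← hM k hk]; exact M.ρ.asGroupHom_apply k)))))

lemma descend_ρ_mk (M : Rep.{0} F G) (hM : ∀ k : G, k ∈ K → M.ρ k = 1) (g : G) :
    (descend M hM).ρ (QuotientGroup.mk g) = M.ρ g := by
  show (Units.coeHom (Module.End F M.V)).comp
    (QuotientGroup.lift K M.ρ.asGroupHom _) (QuotientGroup.mk g) = M.ρ g
  rw [MonoidHom.comp_apply, QuotientGroup.lift_mk]
  exact M.ρ.asGroupHom_apply g

/-- `M` is isomorphic to the inflation of its descent. -/
noncomputable def descendIso (M : Rep.{0} F G) (hM : ∀ k : G, k ∈ K → M.ρ k = 1) :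
    M ≅ (infl K).obj (descend M hM) :=
  Rep.mkIso (ρ := M.ρ) (σ := ((infl K).obj (descend M hM)).ρ)
    (Representation.Equiv.mk (LinearEquiv.refl F M.V) (fun g => LinearMap.ext fun x => by
    show M.ρ g x = (descend M hM).ρ (QuotientGroup.mk g) x
    rw [descend_ρ_mk]
    rfl))

/-- Trivial `K`-action descends through a retract. -/
lemma retract_triv {M N : Rep.{0} F G} (i : M ⟶ N) (r : N ⟶ M) (hir : i ≫ r = 𝟙 M)
    (hN : ∀ k : G, k ∈ K → N.ρ k = 1) : ∀ k : G, k ∈ K → M.ρ k = 1 := by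
  intro k hk
  ext x
  have h1 : i.hom (M.ρ k x) = N.ρ k (i.hom x) := Rep.hom_comm_apply i k x
  have h2 : ∀ y : M, r.hom (i.hom y) = y := fun y => by
    have := congrArg (fun f => f.hom y) hir
    simpa using this
  have := congrArg r.hom h1
  rw [h2 (M.ρ k x), hN k hk] at this
  simpa using this.trans (h2 x)

end Inflation
section RetractUtils

variable {C : Type*} [Category C] {D : Type*} [Category D]

lemma IsDirectSummand.refl (M : C) : IsDirectSummand M M := ⟨𝟙 M, 𝟙 M, by simp⟩

lemma IsDirectSummand.trans {M N P : C} (h1 : IsDirectSummand M N)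
    (h2 : IsDirectSummand N P) : IsDirectSummand M P := by
  obtain ⟨i1, r1, h1⟩ := h1
  obtain ⟨i2, r2, h2⟩ := h2
  exact ⟨i1 ≫ i2, r2 ≫ r1, by
    rw [Category.assoc, ← Category.assoc i2, h2, Category.id_comp, h1]⟩

lemma IsDirectSummand.of_iso {M M' N N' : C} (eM : M ≅ M') (eN : N ≅ N')
    (h : IsDirectSummand M N) : IsDirectSummand M' N' := by
  obtain ⟨i, r, hir⟩ := h
  exact ⟨eM.inv ≫ i ≫ eN.hom, eN.inv ≫ r ≫ eM.hom, by
    simp only [Category.assoc, Iso.hom_inv_id_assoc]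
    rw [← Category.assoc i r, hir]
    simp⟩

lemma IsDirectSummand.map {M N : C} (Fn : C ⥤ D) (h : IsDirectSummand M N) :
    IsDirectSummand (Fn.obj M) (Fn.obj N) := by
  obtain ⟨i, r, hir⟩ := h
  exact ⟨Fn.map i, Fn.map r, by rw [← Fn.map_comp, hir, Fn.map_id]⟩

lemma Projective.of_summand {Q P : C} (h : IsDirectSummand Q P) (hP : Projective P) :
    Projective Q := by
  obtain ⟨i, r, hir⟩ := h
  constructor
  intro E X f e he
  obtain ⟨g, hg⟩ := hP.factors (r ≫ f) e
  exact ⟨i ≫ g, by rw [Category.assoc, hg, ← Category.assoc, hir, Category.id_comp]⟩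

end RetractUtils

section TrivialInd

variable {K : Subgroup G} [K.Normal] {H : Subgroup G}

lemma ind_ρ_triv (hKH : K ≤ H) (E : Rep.{0} F H)
    (hE : ∀ h : H, (h : G) ∈ K → E.ρ h = 1) :
    ∀ k : G, k ∈ K → (ind H E).ρ k = 1 := by
  intro k hk
  refine Submodule.linearMap_qext _ ?_
  ext g v
  show (ind H E).ρ k (indMk H E (Finsupp.single g v)) = indMk H E (Finsupp.single g v)
  rw [ind_ρ_mk, Finsupp.mapDomain_single]
  have hmem : g⁻¹ * k * g ∈ K := by
    have := Subgroup.Normal.conj_mem ‹K.Normal› k hk g⁻¹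
    simpa using this
  have hkg : k * g = g * (((⟨g⁻¹ * k * g, hKH hmem⟩ : H) : H) : G) := by
    show k * g = g * (g⁻¹ * k * g)
    group
  rw [hkg, indMk_rel, hE _ hmem]
  rfl

/-- Unlift a morphism between inflations. -/
noncomputable def inflHomInv {Q P : Rep.{0} F (G ⧸ K)}
    (f : (infl K).obj Q ⟶ (infl K).obj P) : Q ⟶ P :=
  ConcreteCategory.ofHom (C := Rep.{0} F (G ⧸ K)) ⟨f.hom.toLinearMap, fun q => by
    induction q using QuotientGroup.induction_on with
    | H g => exact f.hom.2 g⟩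

lemma isDirectSummand_of_infl {Q P : Rep.{0} F (G ⧸ K)}
    (h : IsDirectSummand ((infl K).obj Q) ((infl K).obj P)) : IsDirectSummand Q P := by
  obtain ⟨i, r, hir⟩ := h
  refine ⟨inflHomInv i, inflHomInv r, ?_⟩
  apply Rep.hom_ext
  apply Representation.IntertwiningMap.ext
  exact congrArg (fun f => f.hom.toLinearMap) hir

end TrivialInd
section MainIso

variable {K : Subgroup G} [K.Normal] {U : Subgroup G}
variable (F₀ : Rep.{0} F (U.map (QuotientGroup.mk' K)))

/-- `F₀` viewed as a representation of `U` by inflation along `U → U/K`. -/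
noncomputable abbrev resSub : Rep.{0} F U :=
  (Rep.resFunctor ((QuotientGroup.mk' K).subgroupMap U)).obj F₀

lemma resSub_ρ_triv : ∀ h : U, (h : G) ∈ K → (resSub F₀).ρ h = 1 := by
  intro h hh
  show F₀.ρ ((QuotientGroup.mk' K).subgroupMap U h) = 1
  have h1 : (QuotientGroup.mk' K).subgroupMap U h = 1 := by
    apply Subtype.ext
    show QuotientGroup.mk' K (h : G) = ((1 : (U.map (QuotientGroup.mk' K))) : G ⧸ K)
    rw [OneMemClass.coe_one]
    exact (QuotientGroup.eq_one_iff _).mpr hh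
  rw [h1, map_one]

/-- The forward linear map `F[G] ⊗_{F[U]} F₀ → F[G/K] ⊗_{F[U/K]} F₀`. -/
noncomputable def inflIndFwdAux : (G →₀ (resSub F₀)) →ₗ[F] (ind (U.map (QuotientGroup.mk' K)) F₀) :=
  (indMk (U.map (QuotientGroup.mk' K)) F₀).comp
    (Finsupp.lmapDomain _ F (QuotientGroup.mk : G → G ⧸ K))

lemma inflIndFwdAux_single (g : G) (v : resSub F₀) :
    inflIndFwdAux F₀ (Finsupp.single g v)
      = indMk (U.map (QuotientGroup.mk' K)) F₀ (Finsupp.single (QuotientGroup.mk g) v) := by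
  show indMk (U.map (QuotientGroup.mk' K)) F₀
      (Finsupp.mapDomain QuotientGroup.mk (Finsupp.single g v)) = _
  rw [Finsupp.mapDomain_single]

lemma inflIndFwd_ker : indRel U (resSub F₀) ≤ LinearMap.ker (inflIndFwdAux F₀) := by
  rw [indRel, Submodule.span_le]
  rintro x ⟨g, h, v, rfl⟩
  simp only [SetLike.mem_coe, LinearMap.mem_ker, map_sub, inflIndFwdAux_single, sub_eq_zero]
  have h1 : (QuotientGroup.mk (g * (h : G)) : G ⧸ K)
      = QuotientGroup.mk g * ((((QuotientGroup.mk' K).subgroupMap U h) :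
          U.map (QuotientGroup.mk' K)) : G ⧸ K) := rfl
  rw [inflIndFwdAux_single, inflIndFwdAux_single, h1, indMk_rel]
  rfl

/-- The backward map, coset by coset. -/
noncomputable def inflIndBwdAux (hKU : K ≤ U) : (G ⧸ K) → (F₀ →ₗ[F] (ind U (resSub F₀))) :=
  fun q => Quotient.liftOn' q (fun g => (indMk U (resSub F₀)).comp (Finsupp.lsingle g))
    (fun a b hab => by
      have hk : a⁻¹ * b ∈ K := QuotientGroup.leftRel_apply.mp hab
      ext v
      show indMk U (resSub F₀) (Finsupp.single a v) = indMk U (resSub F₀) (Finsupp.single b v)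
      have hb : b = a * (((⟨a⁻¹ * b, hKU hk⟩ : U) : U) : G) := by
        show b = a * (a⁻¹ * b); group
      conv_rhs => rw [hb]
      rw [indMk_rel, resSub_ρ_triv F₀ _ hk]
      rfl)

lemma inflIndBwdAux_mk (hKU : K ≤ U) (g : G) (v : F₀) :
    inflIndBwdAux F₀ hKU (QuotientGroup.mk g) v = indMk U (resSub F₀) (Finsupp.single g v) :=
  rfl

/-- The backward linear map. -/
noncomputable def inflIndBwd (hKU : K ≤ U) : ((G ⧸ K) →₀ F₀) →ₗ[F] (ind U (resSub F₀)) :=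
  Finsupp.lsum F (inflIndBwdAux F₀ hKU)

lemma inflIndBwd_single (hKU : K ≤ U) (g : G) (v : F₀) :
    inflIndBwd F₀ hKU (Finsupp.single (QuotientGroup.mk g) v)
      = indMk U (resSub F₀) (Finsupp.single g v) := by
  simp only [inflIndBwd, Finsupp.lsum_single]
  rfl

lemma inflIndBwd_ker (hKU : K ≤ U) :
    indRel (U.map (QuotientGroup.mk' K)) F₀ ≤ LinearMap.ker (inflIndBwd F₀ hKU) := by
  rw [indRel, Submodule.span_le]
  rintro x ⟨q, h, v, rfl⟩
  obtain ⟨u, hu, hcoe⟩ := h.2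
  induction q using QuotientGroup.induction_on with
  | H g =>
    simp only [SetLike.mem_coe, LinearMap.mem_ker, map_sub, sub_eq_zero]
    have h1 : QuotientGroup.mk g * (h : G ⧸ K) = (QuotientGroup.mk (g * u) : G ⧸ K) := by
      rw [← hcoe]; rfl
    rw [h1, inflIndBwd_single, inflIndBwd_single]
    have h2 : g * u = g * (((⟨u, hu⟩ : U) : U) : G) := rfl
    rw [h2, indMk_rel]
    have h4 : ((QuotientGroup.mk' K).subgroupMap U) ⟨u, hu⟩ = h := Subtype.ext hcoe
    have h3 : (resSub F₀).ρ (⟨u, hu⟩ : U) v = F₀.ρ h v := by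
      show F₀.ρ (((QuotientGroup.mk' K).subgroupMap U) ⟨u, hu⟩) v = F₀.ρ h v
      rw [h4]
    rw [h3]

end MainIso
section MainIso2

variable {K : Subgroup G} [K.Normal] {U : Subgroup G}
variable (F₀ : Rep.{0} F (U.map (QuotientGroup.mk' K))) (hKU : K ≤ U)

/-- Forward map on the induced modules. -/
noncomputable def inflIndFwd : (ind U (resSub F₀) : Rep.{0} F G) →ₗ[F] (ind (U.map (QuotientGroup.mk' K)) F₀) :=
  (indRel U (resSub F₀)).liftQ (inflIndFwdAux F₀) (inflIndFwd_ker F₀)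

lemma inflIndFwd_mk_single (g : G) (v : resSub F₀) :
    inflIndFwd F₀ (indMk U (resSub F₀) (Finsupp.single g v))
      = indMk (U.map (QuotientGroup.mk' K)) F₀ (Finsupp.single (QuotientGroup.mk g) v) :=
  inflIndFwdAux_single F₀ g v

/-- Backward map on the induced modules. -/
noncomputable def inflIndBwd' : (ind (U.map (QuotientGroup.mk' K)) F₀ : Rep.{0} F (G ⧸ K)) →ₗ[F] (ind U (resSub F₀)) :=
  (indRel (U.map (QuotientGroup.mk' K)) F₀).liftQ (inflIndBwd F₀ hKU) (inflIndBwd_ker F₀ hKU)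

lemma inflIndBwd'_mk_single (g : G) (v : F₀) :
    inflIndBwd' F₀ hKU (indMk (U.map (QuotientGroup.mk' K)) F₀
        (Finsupp.single (QuotientGroup.mk g) v))
      = indMk U (resSub F₀) (Finsupp.single g v) :=
  inflIndBwd_single F₀ hKU g v

lemma inflInd_left_inv :
    (inflIndBwd' F₀ hKU).comp (inflIndFwd F₀) = LinearMap.id := by
  apply Submodule.linearMap_qext
  ext g v
  show inflIndBwd' F₀ hKU (inflIndFwd F₀ (indMk U (resSub F₀) (Finsupp.single g v)))
    = indMk U (resSub F₀) (Finsupp.single g v)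
  rw [inflIndFwd_mk_single, inflIndBwd'_mk_single]

lemma inflInd_right_inv :
    (inflIndFwd F₀).comp (inflIndBwd' F₀ hKU) = LinearMap.id := by
  apply Submodule.linearMap_qext
  ext q v
  induction q using QuotientGroup.induction_on with
  | H g =>
    show inflIndFwd F₀ (inflIndBwd' F₀ hKU (indMk (U.map (QuotientGroup.mk' K)) F₀
        (Finsupp.single (QuotientGroup.mk g) v)))
      = indMk (U.map (QuotientGroup.mk' K)) F₀ (Finsupp.single (QuotientGroup.mk g) v)
    rw [inflIndBwd'_mk_single, inflIndFwd_mk_single]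

lemma inflIndFwd_comm (g₀ : G) :
    (inflIndFwd F₀).comp (((ind U (resSub F₀)).ρ g₀ : (ind U (resSub F₀) : Rep.{0} F G).V →ₗ[F] _))
      = (((ind (U.map (QuotientGroup.mk' K)) F₀).ρ (QuotientGroup.mk g₀)
          : (ind (U.map (QuotientGroup.mk' K)) F₀ : Rep.{0} F (G ⧸ K)).V →ₗ[F] _)).comp (inflIndFwd F₀) := by
  apply Submodule.linearMap_qext
  ext g v
  show inflIndFwd F₀ ((ind U (resSub F₀)).ρ g₀ (indMk U (resSub F₀) (Finsupp.single g v)))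
    = (ind (U.map (QuotientGroup.mk' K)) F₀).ρ (QuotientGroup.mk g₀)
        (inflIndFwd F₀ (indMk U (resSub F₀) (Finsupp.single g v)))
  rw [ind_ρ_mk, Finsupp.mapDomain_single, inflIndFwd_mk_single, inflIndFwd_mk_single,
    ind_ρ_mk, Finsupp.mapDomain_single]
  rfl

/-- The key isomorphism `Ind_U^G (Inf F₀) ≅ Inf (Ind_{U/K}^{G/K} F₀)`. -/
noncomputable def indInflIso :
    (ind U (resSub F₀) : Rep.{0} F G) ≅ (infl K).obj (ind (U.map (QuotientGroup.mk' K)) F₀) :=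
  Rep.mkIso (ρ := (ind U (resSub F₀)).ρ)
    (σ := ((infl K).obj (ind (U.map (QuotientGroup.mk' K)) F₀)).ρ)
    (Representation.Equiv.mk (LinearEquiv.ofLinear (inflIndFwd F₀) (inflIndBwd' F₀ hKU)
      (inflInd_right_inv F₀ hKU) (inflInd_left_inv F₀ hKU))
    (fun g₀ => inflIndFwd_comm F₀ g₀))

end MainIso2
section PermSummand

lemma projective_summand_regular (Q : Rep.{0} F G) [FiniteDimensional F Q.V]
    (hQ : Projective Q) :
    ∃ n : ℕ, IsDirectSummand Q (⨁ fun _ : Fin n => Rep.ofMulAction F G G) := by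
  set n := Module.finrank F Q.V with hn
  let b : Module.Basis (Fin n) F Q.V := Module.finBasis F Q.V
  let π : (⨁ fun _ : Fin n => Rep.ofMulAction F G G) ⟶ Q :=
    biproduct.desc (fun j => Rep.leftRegularHom Q (b j))
  have hepi : Epi π := by
    constructor
    intro Z u v huv
    apply Rep.hom_ext
    apply Representation.IntertwiningMap.ext
    apply Module.Basis.ext b
    intro j
    have hj := congrArg (fun t => biproduct.ι (fun _ : Fin n => Rep.ofMulAction F G G) j ≫ t) huv
    simp only [biproduct.ι_desc_assoc, π] at hj
    have := congrArg (fun t => t.hom (MonoidAlgebra.single (1 : G) (1 : F))) hj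
    simpa [Rep.leftRegularHom_hom_single] using this
  obtain ⟨s, hs⟩ := hQ.factors (𝟙 Q) π
  exact ⟨n, ⟨s, π, hs⟩⟩

variable (K : Subgroup G) [K.Normal]

lemma infl_ofMulAction_ρ (g : G) :
    (Representation.ofMulAction F (G ⧸ K) (G ⧸ K)) (QuotientGroup.mk g)
      = Representation.ofMulAction F G (G ⧸ K) g := by
  apply MonoidAlgebra.lhom_ext'
  intro q
  refine LinearMap.ext fun a => ?_
  simp only [LinearMap.comp_apply, MonoidAlgebra.lsingle_apply]
  rw [Representation.ofMulAction_single, Representation.ofMulAction_single]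
  induction q using QuotientGroup.induction_on with
  | H x => rfl

/-- The inflation of the left regular representation of `G ⧸ K` is the permutation
module on `G ⧸ K`. -/
noncomputable def inflRegularIso :
    (infl K).obj (Rep.ofMulAction F (G ⧸ K) (G ⧸ K)) ≅ Rep.ofMulAction F G (G ⧸ K) :=
  Rep.mkIso (ρ := ((infl K).obj (Rep.ofMulAction F (G ⧸ K) (G ⧸ K))).ρ)
    (σ := Representation.ofMulAction F G (G ⧸ K))
    (Representation.Equiv.mk (LinearEquiv.refl F _) (fun g => LinearMap.ext fun x => by
    show (Representation.ofMulAction F (G ⧸ K) (G ⧸ K)) (QuotientGroup.mk g) x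
      = Representation.ofMulAction F G (G ⧸ K) g x
    rw [infl_ofMulAction_ρ]))

end PermSummand
/-- for `K ⊴ V`, `K ≤ U ≤ V` and a finite-dimensional projective
`F[U/K]`-module `F₀`, every indecomposable direct summand `M` of
`Ind_U^V (Inf_{U/K} F₀)` is the inflation of a projective `F[V/K]`-module; in
particular `M` is a direct summand of a finite direct sum of copies of the
permutation module `F[V/K]`, hence exprojective. -/
theorem stmt11 (p : ℕ) (hp : p.Prime) (F : Type) [Field F] [CharP F p]
    (V : Type) [Group V] [Finite V] (U K : Subgroup V) [K.Normal] (hKU : K ≤ U)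
    (F₀ : Rep.{0} F (U.map (QuotientGroup.mk' K))) [FiniteDimensional F F₀.V]
    (hproj : Projective F₀) :
    ∀ M : Rep.{0} F V, RepIndecomposable M →
      IsDirectSummand M (ind U ((Rep.resFunctor
        ((QuotientGroup.mk' K).subgroupMap U)).obj F₀)) →
      (∃ Q : Rep.{0} F (V ⧸ K), Projective Q ∧
        Nonempty (M ≅ (Rep.resFunctor (QuotientGroup.mk' K)).obj Q)) ∧
      (∃ n : ℕ, IsDirectSummand M (⨁ fun _ : Fin n => Rep.ofMulAction F V (V ⧸ K))) ∧
      Exprojective M := by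
  intro M _ hMsum
  classical
  have hMsummand : IsDirectSummand M (ind U (resSub F₀)) := hMsum
  have htrivN : ∀ k : V, k ∈ K → (ind U (resSub F₀)).ρ k = 1 :=
    ind_ρ_triv hKU _ (resSub_ρ_triv F₀)
  obtain ⟨i, r, hir⟩ := hMsummand
  have htrivM : ∀ k : V, k ∈ K → M.ρ k = 1 := retract_triv i r hir htrivN
  have isoM : M ≅ (infl K).obj (descend M htrivM) := descendIso M htrivM
  have hPproj : Projective (ind (U.map (QuotientGroup.mk' K)) F₀) := ind_projective hproj
  have isoN : (ind U (resSub F₀) : Rep.{0} F V) ≅ (infl K).obj (ind (U.map (QuotientGroup.mk' K)) F₀) :=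
    indInflIso F₀ hKU
  have h1 : IsDirectSummand ((infl K).obj (descend M htrivM))
      ((infl K).obj (ind (U.map (QuotientGroup.mk' K)) F₀)) :=
    IsDirectSummand.of_iso isoM isoN ⟨i, r, hir⟩
  have hQP : IsDirectSummand (descend M htrivM) (ind (U.map (QuotientGroup.mk' K)) F₀) :=
    isDirectSummand_of_infl h1
  have hQproj : Projective (descend M htrivM) := Projective.of_summand hQP hPproj
  -- finite dimensionality
  haveI hfin0 : Module.Finite F (resSub F₀ : Type) := ‹FiniteDimensional F F₀.V›
  have hfinN : Module.Finite F (ind U (resSub F₀) : Rep.{0} F V).V := by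
    haveI h2 : Module.Finite F (V →₀ (resSub F₀)) :=
      Module.Finite.equiv (Finsupp.linearEquivFunOnFinite F _ V).symm
    exact Module.Finite.of_surjective (indMk U (resSub F₀)) (indMk_surjective U (resSub F₀))
  have hrsurj : Function.Surjective r.hom := by
    intro y
    refine ⟨i.hom y, ?_⟩
    have := congrArg (fun f => f.hom y) hir
    simpa using this
  have hfinM : Module.Finite F M.V := Module.Finite.of_surjective r.hom.toLinearMap hrsurj
  haveI hfinQ : FiniteDimensional F ((descend M htrivM).V) := hfinM
  obtain ⟨n, hQsum⟩ := projective_summand_regular (descend M htrivM) hQproj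
  -- transfer along inflation
  have hMsum2 : IsDirectSummand M (⨁ fun _ : Fin n => Rep.ofMulAction F V (V ⧸ K)) := by
    have h3 := hQsum.map (infl K)
    refine IsDirectSummand.of_iso isoM.symm ?_ h3
    exact (Functor.mapBiproduct (infl K) _).trans
      (biproduct.mapIso fun _ => inflRegularIso K)
  refine ⟨⟨descend M htrivM, hQproj, ⟨isoM⟩⟩, ⟨n, hMsum2⟩, ?_⟩
  exact ⟨n, fun _ => K, fun _ => inferInstance, hMsum2⟩
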